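/- For any n ≥ 2, the span of {α ⊗ σx, i·x_n : α ∈ 𝔰(n−1)} is an abelian subalgebra of su(2^n), where 𝔰(n−1) is the commuting family generated recursively by 𝔞(2) = i{σx⊗σx, σy⊗σy, σz⊗σz} and 𝔰(k) = ∪_{i=2}^{k} 𝔞(i)⊗I^{⊗(k−i)}, 𝔞(n) = {α⊗σx, i·x_n : α ∈ 𝔰(n−1)}. -/
import Mathlib


open Matrix Complex
open scoped Kronecker

/-- The 2×2 Pauli matrices. -/
noncomputable def σx : Matrix (Fin 2) (Fin 2) ℂ := !![0, 1; 1, 0]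
noncomputable def σy : Matrix (Fin 2) (Fin 2) ℂ := !![0, -I; I, 0]
noncomputable def σz : Matrix (Fin 2) (Fin 2) ℂ := !![1, 0; 0, -1]

/-- `su ι`: traceless skew-Hermitian complex matrices indexed by `ι`. -/
def su (ι : Type*) [Fintype ι] [DecidableEq ι] : Set (Matrix ι ι ℂ) :=
  {A | Aᴴ = -A ∧ A.trace = 0}


/-- Matrices on `n` qubits. -/
abbrev QMat (n : ℕ) := Matrix (Fin n → Fin 2) (Fin n → Fin 2) ℂ

/-- Kronecker product appending one qubit (the last one). -/
noncomputable def tens {n : ℕ} (A : QMat n) (B : Matrix (Fin 2) (Fin 2) ℂ) :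
    QMat (n + 1) :=
  fun f g => A (Fin.init f) (Fin.init g) * B (f (Fin.last n)) (g (Fin.last n))

/-- The two-qubit matrix `P ⊗ Q`. -/
noncomputable def q2 (P Q : Matrix (Fin 2) (Fin 2) ℂ) : QMat 2 :=
  tens (tens (1 : QMat 0) P) Q

/-- The recursively defined pair `(𝔞(m+2), 𝔰(m+2))` of Khaneja–Glaser:
𝔞(2) = 𝔰(2) = i{σx⊗σx, σy⊗σy, σz⊗σz},
𝔞(n+1) = {α⊗σx : α ∈ 𝔰(n)} ∪ {i·x_{n+1}},
𝔰(n+1) = {α⊗I : α ∈ 𝔰(n)} ∪ 𝔞(n+1)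
(so that 𝔰(k) = ⋃_{i=2}^{k} 𝔞(i)⊗I^{⊗(k−i)}). -/
noncomputable def aS : (m : ℕ) → Set (QMat (m + 2)) × Set (QMat (m + 2))
  | 0 =>
    ({Complex.I • q2 σx σx, Complex.I • q2 σy σy, Complex.I • q2 σz σz},
     {Complex.I • q2 σx σx, Complex.I • q2 σy σy, Complex.I • q2 σz σz})
  | (m + 1) =>
    let p := aS m
    let a : Set (QMat (m + 3)) :=
      (fun α => tens α σx) '' p.2 ∪ {Complex.I • tens (1 : QMat (m + 2)) σx}
    (a, (fun α => tens α (1 : Matrix (Fin 2) (Fin 2) ℂ)) '' p.2 ∪ a)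

section Aux

private def sEqv (n : ℕ) : (Fin (n+1) → Fin 2) ≃ (Fin n → Fin 2) × Fin 2 where
  toFun f := (Fin.init f, f (Fin.last n))
  invFun p := Fin.snoc p.1 p.2
  left_inv f := Fin.snoc_init_self f
  right_inv p := by simp

private lemma tens_eq {n} (A : QMat n) (B : Matrix (Fin 2) (Fin 2) ℂ) :
    tens A B = (A ⊗ₖ B).submatrix (sEqv n) (sEqv n) := rfl

private lemma tens_mul {n} (A C : QMat n) (B D : Matrix (Fin 2) (Fin 2) ℂ) :
    tens A B * tens C D = tens (A*C) (B*D) := by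
  rw [tens_eq, tens_eq, tens_eq, Matrix.submatrix_mul_equiv, Matrix.mul_kronecker_mul]

private lemma tens_conjT {n} (A : QMat n) (B : Matrix (Fin 2) (Fin 2) ℂ) :
    (tens A B)ᴴ = tens Aᴴ Bᴴ := by
  ext f g
  simp [tens, Matrix.conjTranspose_apply, mul_comm]

private lemma tens_trace {n} (A : QMat n) (B : Matrix (Fin 2) (Fin 2) ℂ) :
    (tens A B).trace = A.trace * B.trace := by
  rw [tens_eq]
  rw [show ((A ⊗ₖ B).submatrix (sEqv n) (sEqv n)).trace = (A ⊗ₖ B).trace from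
    Fintype.sum_equiv (sEqv n) _ _ (fun _ => rfl), Matrix.trace_kronecker]

private lemma tens_smul {n} (c : ℂ) (A : QMat n) (B : Matrix (Fin 2) (Fin 2) ℂ) :
    tens (c • A) B = c • tens A B := by
  ext f g; simp [tens, mul_assoc]

private lemma tens_smul' {n} (c : ℂ) (A : QMat n) (B : Matrix (Fin 2) (Fin 2) ℂ) :
    tens A (c • B) = c • tens A B := by
  ext f g; simp [tens]; ring

private lemma tens_neg {n} (A : QMat n) (B : Matrix (Fin 2) (Fin 2) ℂ) :
    tens (-A) B = -tens A B := by
  ext f g; simp [tens]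

private lemma tens_neg' {n} (A : QMat n) (B : Matrix (Fin 2) (Fin 2) ℂ) :
    tens A (-B) = -tens A B := by
  ext f g; simp [tens]

private lemma tens_one {n} : tens (1 : QMat n) 1 = (1 : QMat (n+1)) := by
  rw [tens_eq, Matrix.one_kronecker_one, Matrix.submatrix_one_equiv]

/- Pauli facts -/
private lemma hx : σxᴴ = σx := by
  ext i j; fin_cases i <;> fin_cases j <;> simp [σx]
private lemma hy : σyᴴ = σy := by
  ext i j; fin_cases i <;> fin_cases j <;> simp [σy]
private lemma hz : σzᴴ = σz := by
  ext i j; fin_cases i <;> fin_cases j <;> simp [σz]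
private lemma tx : σx.trace = 0 := by simp [σx, Matrix.trace_fin_two]
private lemma ty : σy.trace = 0 := by simp [σy, Matrix.trace_fin_two]
private lemma tz : σz.trace = 0 := by simp [σz, Matrix.trace_fin_two]
private lemma xy : σx * σy = -(σy * σx) := by
  ext i j; fin_cases i <;> fin_cases j <;>
    simp [σx, σy, Matrix.mul_apply, Fin.sum_univ_two]
private lemma xz : σx * σz = -(σz * σx) := by
  ext i j; fin_cases i <;> fin_cases j <;>
    simp [σx, σz, Matrix.mul_apply, Fin.sum_univ_two]
private lemma yz : σy * σz = -(σz * σy) := by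
  ext i j; fin_cases i <;> fin_cases j <;>
    simp [σy, σz, Matrix.mul_apply, Fin.sum_univ_two]

private lemma q2_conjT (P Q : Matrix (Fin 2) (Fin 2) ℂ) :
    (q2 P Q)ᴴ = q2 Pᴴ Qᴴ := by
  simp [q2, tens_conjT]

private lemma q2_trace (P Q : Matrix (Fin 2) (Fin 2) ℂ) :
    (q2 P Q).trace = (1 : QMat 0).trace * P.trace * Q.trace := by
  simp [q2, tens_trace, mul_assoc]

private lemma q2_mul (P Q R S : Matrix (Fin 2) (Fin 2) ℂ) :
    q2 P Q * q2 R S = q2 (P * R) (Q * S) := by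
  simp [q2, tens_mul]

private lemma q2_neg_neg (P Q : Matrix (Fin 2) (Fin 2) ℂ) :
    q2 (-P) (-Q) = q2 P Q := by
  simp [q2, tens_neg, tens_neg']

private lemma q2_comm {P Q : Matrix (Fin 2) (Fin 2) ℂ}
    (h : P * Q = -(Q * P)) : q2 P P * q2 Q Q = q2 Q Q * q2 P P := by
  rw [q2_mul, q2_mul, h, q2_neg_neg]

private lemma smul_one_conjT {k : ℕ} :
    (Complex.I • (1 : QMat k))ᴴ = -(Complex.I • (1 : QMat k)) := by
  rw [Matrix.conjTranspose_smul, Matrix.conjTranspose_one]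
  simp

private lemma key (m : ℕ) :
    ∀ A ∈ (aS m).2, (Aᴴ = -A ∧ A.trace = 0) ∧
      ∀ B ∈ (aS m).2, A * B = B * A := by
  induction m with
  | zero =>
    have hprop : ∀ P : Matrix (Fin 2) (Fin 2) ℂ, Pᴴ = P → P.trace = 0 →
        ((Complex.I • q2 P P)ᴴ = -(Complex.I • q2 P P) ∧
          (Complex.I • q2 P P).trace = 0) := by
      intro P hP tP
      constructor
      · rw [Matrix.conjTranspose_smul, q2_conjT, hP]
        simp
      · rw [Matrix.trace_smul, q2_trace, tP]
        simp
    have hcomm : ∀ P Q : Matrix (Fin 2) (Fin 2) ℂ, q2 P P * q2 Q Q = q2 Q Q * q2 P P →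
        (Complex.I • q2 P P) * (Complex.I • q2 Q Q)
          = (Complex.I • q2 Q Q) * (Complex.I • q2 P P) := by
      intro P Q h
      rw [Matrix.smul_mul, Matrix.mul_smul, h, Matrix.smul_mul, Matrix.mul_smul]
    intro A hA
    have hA' : A = Complex.I • q2 σx σx ∨ A = Complex.I • q2 σy σy ∨
        A = Complex.I • q2 σz σz := hA
    have memB : ∀ B ∈ (aS 0).2, B = Complex.I • q2 σx σx ∨
        B = Complex.I • q2 σy σy ∨ B = Complex.I • q2 σz σz := fun B hB => hB
    rcases hA' with rfl | rfl | rfl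
    · refine ⟨hprop _ hx tx, ?_⟩
      intro B hB
      rcases memB B hB with rfl | rfl | rfl
      · rfl
      · exact hcomm _ _ (q2_comm xy)
      · exact hcomm _ _ (q2_comm xz)
    · refine ⟨hprop _ hy ty, ?_⟩
      intro B hB
      rcases memB B hB with rfl | rfl | rfl
      · exact (hcomm _ _ (q2_comm xy)).symm
      · rfl
      · exact hcomm _ _ (q2_comm yz)
    · refine ⟨hprop _ hz tz, ?_⟩
      intro B hB
      rcases memB B hB with rfl | rfl | rfl
      · exact (hcomm _ _ (q2_comm xz)).symm
      · exact (hcomm _ _ (q2_comm yz)).symm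
      · rfl
  | succ m ih =>
    -- decomposition of elements of the new 𝔰
    have decomp : ∀ A ∈ (aS (m+1)).2, ∃ α P, A = tens α P ∧
        ((α ∈ (aS m).2 ∧ (P = 1 ∨ P = σx)) ∨
          (α = Complex.I • (1 : QMat (m+2)) ∧ P = σx)) := by
      intro A hA
      rcases hA with ⟨α, hα, rfl⟩ | (⟨α, hα, rfl⟩ | hA)
      · exact ⟨α, 1, rfl, Or.inl ⟨hα, Or.inl rfl⟩⟩
      · exact ⟨α, σx, rfl, Or.inl ⟨hα, Or.inr rfl⟩⟩
      · refine ⟨Complex.I • (1 : QMat (m+2)), σx, ?_, Or.inr ⟨rfl, rfl⟩⟩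
        rw [Set.mem_singleton_iff.mp hA, tens_smul]
    intro A hA
    obtain ⟨α, P, rfl, hcase⟩ := decomp A hA
    have hαskew : αᴴ = -α := by
      rcases hcase with ⟨hα, _⟩ | ⟨rfl, _⟩
      · exact ((ih α hα).1).1
      · exact smul_one_conjT
    have hPH : Pᴴ = P := by
      rcases hcase with ⟨_, rfl | rfl⟩ | ⟨_, rfl⟩
      · exact Matrix.conjTranspose_one
      · exact hx
      · exact hx
    refine ⟨⟨?_, ?_⟩, ?_⟩
    · rw [tens_conjT, hαskew, hPH, tens_neg]
    · rw [tens_trace]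
      rcases hcase with ⟨hα, _⟩ | ⟨_, rfl⟩
      · rw [((ih α hα).1).2, zero_mul]
      · rw [tx, mul_zero]
    · intro B hB
      obtain ⟨β, Q, rfl, hcaseB⟩ := decomp B hB
      have hαβ : α * β = β * α := by
        rcases hcase with ⟨hα, _⟩ | ⟨rfl, _⟩
        · rcases hcaseB with ⟨hβ, _⟩ | ⟨rfl, _⟩
          · exact (ih α hα).2 β hβ
          · rw [Matrix.mul_smul, Matrix.smul_mul, mul_one, one_mul]
        · rw [Matrix.mul_smul, Matrix.smul_mul, mul_one, one_mul]
      have hPQ : P * Q = Q * P := by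
        have h1 : ∀ R : Matrix (Fin 2) (Fin 2) ℂ, R = 1 ∨ R = σx →
            R * σx = σx * R := by
          rintro R (rfl | rfl)
          · rw [one_mul, mul_one]
          · rfl
        rcases hcase with ⟨_, hP⟩ | ⟨_, rfl⟩
        · rcases hcaseB with ⟨_, rfl | rfl⟩ | ⟨_, rfl⟩
          · rw [one_mul, mul_one]
          · exact h1 P hP
          · exact h1 P hP
        · rcases hcaseB with ⟨_, rfl | rfl⟩ | ⟨_, rfl⟩
          · rw [one_mul, mul_one]
          · rfl
          · rfl
      rw [tens_mul, tens_mul, hαβ, hPQ]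

private lemma a_sub_s (m : ℕ) : (aS m).1 ⊆ (aS m).2 := by
  cases m with
  | zero => exact subset_rfl
  | succ m => exact Set.subset_union_right

end Aux

/-- For any n ≥ 2 (written n = m + 2), the real span of
𝔞(n) = {α ⊗ σx, i·x_n : α ∈ 𝔰(n−1)} is an abelian subalgebra of su(2^n):
it consists of traceless skew-Hermitian matrices and all of its elements
pairwise commute. -/
theorem stmt5 (m : ℕ) :
    (↑(Submodule.span ℝ (aS m).1) : Set (QMat (m + 2))) ⊆ su (Fin (m + 2) → Fin 2) ∧
    ∀ A ∈ Submodule.span ℝ (aS m).1, ∀ B ∈ Submodule.span ℝ (aS m).1,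
      A * B = B * A := by
  constructor
  · intro A hA
    refine Submodule.span_induction (p := fun A _ => A ∈ su (Fin (m+2) → Fin 2))
      ?_ ?_ ?_ ?_ hA
    · intro x hx
      exact (key m x (a_sub_s m hx)).1
    · constructor <;> simp
    · rintro x y _ _ ⟨hx1, hx2⟩ ⟨hy1, hy2⟩
      constructor
      · rw [Matrix.conjTranspose_add, hx1, hy1, neg_add]
      · rw [Matrix.trace_add, hx2, hy2, add_zero]
    · rintro r x _ ⟨hx1, hx2⟩
      constructor
      · rw [Matrix.conjTranspose_smul, hx1, star_trivial, smul_neg]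
      · rw [Matrix.trace_smul, hx2, smul_zero]
  · intro A hA B hB
    refine Submodule.span_induction₂ (p := fun A B _ _ => A * B = B * A)
      ?_ ?_ ?_ ?_ ?_ ?_ ?_ hA hB
    · intro x y hx hy
      exact (key m x (a_sub_s m hx)).2 y (a_sub_s m hy)
    · intro y _; rw [zero_mul, mul_zero]
    · intro x _; rw [zero_mul, mul_zero]
    · intro x y z _ _ _ h1 h2; rw [add_mul, mul_add, h1, h2]
    · intro x y z _ _ _ h1 h2; rw [mul_add, add_mul, h1, h2]
    · intro r x y _ _ h; rw [smul_mul_assoc, mul_smul_comm, h]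
    · intro r x y _ _ h; rw [mul_smul_comm, smul_mul_assoc, h]
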